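/- Let Γ be the random bipartite graph. Then S_{l}(Γ) = {σ ∈ Sym_{l,r}(Γ) : σ preserves the parity of cross-types in every (1×2)-subgraph of Γ}. -/

import Mathlib

/-! Preamble: bipartite graphs, the random bipartite graph, side-preserving
permutation groups, switches, switch groups, and related notions. -/

/-- A bipartite graph on a vertex type `V`: the sides `left` and `right`
partition `V`, both sides are nonempty, and `adj` (the relation `P₁`) only holds
from `left` to `right`.  The relation `P₂` is the complement of `adj` on
`left × right`. -/
structure BipartiteGraph (V : Type*) where
  left : Set V
  right : Set V
  adj : V → V → Prop
  left_nonempty : left.Nonempty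
  right_nonempty : right.Nonempty
  union_eq : left ∪ right = Set.univ
  disjoint_sides : Disjoint left right
  adj_dom : ∀ a b, adj a b → a ∈ left ∧ b ∈ right

/-- The two sides of a bipartite graph. -/
inductive BSide : Type
  | l : BSide
  | r : BSide
deriving DecidableEq

namespace BipartiteGraph

variable {V : Type*} (Γ : BipartiteGraph V)

/-- The side of the graph indexed by an element of `BSide`. -/
def side : BSide → Set V
  | BSide.l => Γ.left
  | BSide.r => Γ.right

/-- `Γ` is (isomorphic to) the random bipartite graph: it is countable, both
sides are infinite, and it satisfies the extension properties `Θₙ` for all `n`. -/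
structure IsRandom : Prop where
  countable : Countable V
  left_infinite : Γ.left.Infinite
  right_infinite : Γ.right.Infinite
  ext_left : ∀ X₁ X₂ : Finset V, ↑X₁ ⊆ Γ.left → ↑X₂ ⊆ Γ.left → Disjoint X₁ X₂ →
      ∃ v ∈ Γ.right, (∀ x ∈ X₁, Γ.adj x v) ∧ (∀ x ∈ X₂, ¬ Γ.adj x v)
  ext_right : ∀ X₁ X₂ : Finset V, ↑X₁ ⊆ Γ.right → ↑X₂ ⊆ Γ.right → Disjoint X₁ X₂ →
      ∃ v ∈ Γ.left, (∀ x ∈ X₁, Γ.adj v x) ∧ (∀ x ∈ X₂, ¬ Γ.adj v x)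

/-- `Sym_{l,r}(Γ)`: the group of permutations of `V` preserving both sides. -/
def symLR : Subgroup (Equiv.Perm V) where
  carrier := {g | (∀ v, g v ∈ Γ.left ↔ v ∈ Γ.left) ∧ (∀ v, g v ∈ Γ.right ↔ v ∈ Γ.right)}
  one_mem' := ⟨fun _ => Iff.rfl, fun _ => Iff.rfl⟩
  mul_mem' := by
    rintro a b ⟨hal, har⟩ ⟨hbl, hbr⟩
    exact ⟨fun v => (hal (b v)).trans (hbl v), fun v => (har (b v)).trans (hbr v)⟩
  inv_mem' := by
    rintro a ⟨hal, har⟩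
    refine ⟨fun v => ?_, fun v => ?_⟩
    · have h := hal (a⁻¹ v); rw [Equiv.Perm.coe_inv, Equiv.apply_symm_apply] at h; exact h.symm
    · have h := har (a⁻¹ v); rw [Equiv.Perm.coe_inv, Equiv.apply_symm_apply] at h; exact h.symm

/-- The automorphism group of `Γ`: side-preserving permutations preserving `adj`
(and hence both cross-types). -/
def autGroup : Subgroup (Equiv.Perm V) where
  carrier := {g | g ∈ Γ.symLR ∧ ∀ a b, Γ.adj a b ↔ Γ.adj (g a) (g b)}
  one_mem' := ⟨Γ.symLR.one_mem, fun _ _ => Iff.rfl⟩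
  mul_mem' := by
    rintro a b ⟨ha, ha2⟩ ⟨hb, hb2⟩
    exact ⟨mul_mem ha hb, fun x y => (hb2 x y).trans (ha2 (b x) (b y))⟩
  inv_mem' := by
    rintro a ⟨ha, ha2⟩
    refine ⟨inv_mem ha, fun x y => ?_⟩
    have h := ha2 (a⁻¹ x) (a⁻¹ y)
    rw [Equiv.Perm.coe_inv, Equiv.apply_symm_apply, Equiv.apply_symm_apply] at h
    exact h.symm

/-- A permutation `g` is a switch with respect to a set `A` if it preserves the
sides and, for every cross-edge `(a, b)`, the cross-type of `(a, b)` is preserved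
if and only if `|{a, b} ∩ A| ≠ 1`. -/
def IsSwitch (g : Equiv.Perm V) (A : Set V) : Prop :=
  g ∈ Γ.symLR ∧ ∀ a ∈ Γ.left, ∀ b ∈ Γ.right,
    ((Γ.adj a b ↔ Γ.adj (g a) (g b)) ↔ ({a, b} ∩ A : Set V).ncard ≠ 1)

/-- The restriction of a map `g` to a set `S` is a switch with respect to `A`:
the condition of `IsSwitch` holds for all cross-edges inside `S`. -/
def IsSwitchOn (g : V → V) (S : Set V) (A : Set V) : Prop :=
  ∀ a ∈ S ∩ Γ.left, ∀ b ∈ S ∩ Γ.right,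
    ((Γ.adj a b ↔ Γ.adj (g a) (g b)) ↔ ({a, b} ∩ A : Set V).ncard ≠ 1)

/-- The restriction of a map `g` to a set `S` is an isomorphism: `g` preserves
the cross-type of every cross-edge inside `S`. -/
def IsIsoOn (g : V → V) (S : Set V) : Prop :=
  ∀ a ∈ S ∩ Γ.left, ∀ b ∈ S ∩ Γ.right, (Γ.adj a b ↔ Γ.adj (g a) (g b))

end BipartiteGraph

/-- A subgroup of the full symmetric group is closed (in the topology of
pointwise convergence) iff it contains every permutation which agrees with some
member of the subgroup on each finite subset. -/
def IsClosedSubgroup {V : Type*} (G : Subgroup (Equiv.Perm V)) : Prop :=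
  ∀ g : Equiv.Perm V, (∀ F : Finset V, ∃ h ∈ G, ∀ x ∈ F, h x = g x) → g ∈ G

/-- The closed subgroup generated by a set of permutations: the intersection of
all closed subgroups containing the set. -/
def closedClosure {V : Type*} (S : Set (Equiv.Perm V)) : Subgroup (Equiv.Perm V) :=
  sInf {G : Subgroup (Equiv.Perm V) | IsClosedSubgroup G ∧ S ⊆ ↑G}

namespace BipartiteGraph

variable {V : Type*} (Γ : BipartiteGraph V)

/-- The switch group `S_X(Γ)`: the closed subgroup of `Sym_{l,r}(Γ)` generated
by `Aut(Γ)` together with all switches with respect to a single vertex `v ∈ R_i`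
for `i ∈ X`. -/
def switchGroup (X : Set BSide) : Subgroup (Equiv.Perm V) :=
  closedClosure ((Γ.autGroup : Set (Equiv.Perm V)) ∪
    {g | ∃ i ∈ X, ∃ v ∈ Γ.side i, Γ.IsSwitch g {v}})

/-- The group `S_X(Γ)* `: the closed subgroup generated by `S_X(Γ)` together with
a switch `ρ` with respect to the whole side `R_l`. -/
def switchGroupStar (X : Set BSide) : Subgroup (Equiv.Perm V) :=
  closedClosure ((Γ.switchGroup X : Set (Equiv.Perm V)) ∪ {g | Γ.IsSwitch g Γ.left})

/-- Membership in `Aut(Γ)*`, the group of side-preserving permutations which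
either preserve all cross-types on `R_l × R_r` or exchange all cross-types on
`R_l × R_r`. -/
def InAutStar (g : Equiv.Perm V) : Prop :=
  g ∈ Γ.symLR ∧
    ((∀ a ∈ Γ.left, ∀ b ∈ Γ.right, (Γ.adj a b ↔ Γ.adj (g a) (g b))) ∨
     (∀ a ∈ Γ.left, ∀ b ∈ Γ.right, (Γ.adj a b ↔ ¬ Γ.adj (g a) (g b))))

/-- The number of cross-edges of cross-type `P₁` inside the set `S`. -/
noncomputable def edgeCount (S : Set V) : ℕ :=
  {p : V × V | p.1 ∈ S ∧ p.2 ∈ S ∧ Γ.adj p.1 p.2}.ncard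

/-- `g` preserves the parity of cross-types on `S`: the number of `P₁`
cross-edges in `S` is even iff the number of `P₁` cross-edges in `g[S]` is even. -/
def PreservesParityOn (g : V → V) (S : Set V) : Prop :=
  Even (Γ.edgeCount S) ↔ Even (Γ.edgeCount (g '' S))

/-- An `(m × n)`-subgraph of `Γ`: a finite set of vertices with `m` vertices on
the left side and `n` vertices on the right side. -/
def IsMNSubgraph (S : Set V) (m n : ℕ) : Prop :=
  S.Finite ∧ (S ∩ Γ.left).ncard = m ∧ (S ∩ Γ.right).ncard = n

end BipartiteGraph

namespace BG23

open BipartiteGraph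

open scoped Classical

variable {V : Type*} (Γ : BipartiteGraph V)

lemma left_not_right {v : V} (h : v ∈ Γ.left) : v ∉ Γ.right :=
  fun h' => Set.disjoint_left.mp Γ.disjoint_sides h h'

lemma right_not_left {v : V} (h : v ∈ Γ.right) : v ∉ Γ.left :=
  fun h' => Set.disjoint_left.mp Γ.disjoint_sides h' h

lemma mem_left_or_right (v : V) : v ∈ Γ.left ∨ v ∈ Γ.right := by
  have : v ∈ Γ.left ∪ Γ.right := by rw [Γ.union_eq]; exact Set.mem_univ v
  exact this

lemma mem_symLR_iff {g : Equiv.Perm V} :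
    g ∈ Γ.symLR ↔ (∀ v, g v ∈ Γ.left ↔ v ∈ Γ.left) ∧ (∀ v, g v ∈ Γ.right ↔ v ∈ Γ.right) :=
  Iff.rfl

lemma ncard_sep_pair {α : Type*} {b₁ b₂ : α} (hne : b₁ ≠ b₂) (p : α → Prop) :
    {b | b ∈ ({b₁, b₂} : Set α) ∧ p b}.ncard
      = (if p b₁ then 1 else 0) + (if p b₂ then 1 else 0) := by
  classical
  by_cases h1 : p b₁ <;> by_cases h2 : p b₂
  · have : {b | b ∈ ({b₁, b₂} : Set α) ∧ p b} = {b₁, b₂} := by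
      ext x
      simp only [Set.mem_setOf_eq, Set.mem_insert_iff, Set.mem_singleton_iff]
      constructor
      · exact And.left
      · rintro (rfl | rfl) <;> simp [h1, h2]
    rw [this, Set.ncard_pair hne, if_pos h1, if_pos h2]
  · have : {b | b ∈ ({b₁, b₂} : Set α) ∧ p b} = {b₁} := by
      ext x
      simp only [Set.mem_setOf_eq, Set.mem_insert_iff, Set.mem_singleton_iff]
      constructor
      · rintro ⟨rfl | rfl, hp⟩
        · rfl
        · exact absurd hp h2
      · rintro rfl; exact ⟨Or.inl rfl, h1⟩
    rw [this, Set.ncard_singleton, if_pos h1, if_neg h2]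
  · have : {b | b ∈ ({b₁, b₂} : Set α) ∧ p b} = {b₂} := by
      ext x
      simp only [Set.mem_setOf_eq, Set.mem_insert_iff, Set.mem_singleton_iff]
      constructor
      · rintro ⟨rfl | rfl, hp⟩
        · exact absurd hp h1
        · rfl
      · rintro rfl; exact ⟨Or.inr rfl, h2⟩
    rw [this, Set.ncard_singleton, if_neg h1, if_pos h2]
  · have : {b | b ∈ ({b₁, b₂} : Set α) ∧ p b} = ∅ := by
      ext x
      simp only [Set.mem_setOf_eq, Set.mem_insert_iff, Set.mem_singleton_iff,
        Set.mem_empty_iff_false, iff_false, not_and]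
      rintro (rfl | rfl) <;> assumption
    rw [this, Set.ncard_empty, if_neg h1, if_neg h2]

lemma triple_inter_left {a b₁ b₂ : V} (ha : a ∈ Γ.left) (hb₁ : b₁ ∈ Γ.right)
    (hb₂ : b₂ ∈ Γ.right) : ({a, b₁, b₂} : Set V) ∩ Γ.left = {a} := by
  ext x
  simp only [Set.mem_inter_iff, Set.mem_insert_iff, Set.mem_singleton_iff]
  constructor
  · rintro ⟨rfl | rfl | rfl, hx⟩
    · rfl
    · exact absurd hx (right_not_left Γ hb₁)
    · exact absurd hx (right_not_left Γ hb₂)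
  · rintro rfl; exact ⟨Or.inl rfl, ha⟩

lemma triple_inter_right {a b₁ b₂ : V} (ha : a ∈ Γ.left) (hb₁ : b₁ ∈ Γ.right)
    (hb₂ : b₂ ∈ Γ.right) : ({a, b₁, b₂} : Set V) ∩ Γ.right = {b₁, b₂} := by
  ext x
  simp only [Set.mem_inter_iff, Set.mem_insert_iff, Set.mem_singleton_iff]
  constructor
  · rintro ⟨rfl | rfl | rfl, hx⟩
    · exact absurd hx (left_not_right Γ ha)
    · exact Or.inl rfl
    · exact Or.inr rfl
  · rintro (rfl | rfl)
    · exact ⟨Or.inr (Or.inl rfl), hb₁⟩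
    · exact ⟨Or.inr (Or.inr rfl), hb₂⟩

lemma isMNSubgraph_triple {a b₁ b₂ : V} (ha : a ∈ Γ.left) (hb₁ : b₁ ∈ Γ.right)
    (hb₂ : b₂ ∈ Γ.right) (hne : b₁ ≠ b₂) : Γ.IsMNSubgraph ({a, b₁, b₂} : Set V) 1 2 := by
  refine ⟨(Set.finite_singleton b₂).insert b₁ |>.insert a, ?_, ?_⟩
  · rw [triple_inter_left Γ ha hb₁ hb₂, Set.ncard_singleton]
  · rw [triple_inter_right Γ ha hb₁ hb₂, Set.ncard_pair hne]

lemma edgeCount_triple {a b₁ b₂ : V} (ha : a ∈ Γ.left) (hb₁ : b₁ ∈ Γ.right)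
    (hb₂ : b₂ ∈ Γ.right) (hne : b₁ ≠ b₂) :
    Γ.edgeCount ({a, b₁, b₂} : Set V)
      = (if Γ.adj a b₁ then 1 else 0) + (if Γ.adj a b₂ then 1 else 0) := by
  classical
  have hSl := triple_inter_left Γ ha hb₁ hb₂
  have hSr := triple_inter_right Γ ha hb₁ hb₂
  have hset : {p : V × V | p.1 ∈ ({a, b₁, b₂} : Set V) ∧ p.2 ∈ ({a, b₁, b₂} : Set V)
        ∧ Γ.adj p.1 p.2}
      = (fun b => (a, b)) '' {b | b ∈ ({b₁, b₂} : Set V) ∧ Γ.adj a b} := by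
    ext p
    constructor
    · rintro ⟨h1, h2, h3⟩
      have hd := Γ.adj_dom _ _ h3
      have hp1 : p.1 = a := by
        have : p.1 ∈ ({a, b₁, b₂} : Set V) ∩ Γ.left := ⟨h1, hd.1⟩
        rw [hSl] at this; exact this
      have hp2 : p.2 ∈ ({b₁, b₂} : Set V) := by
        have : p.2 ∈ ({a, b₁, b₂} : Set V) ∩ Γ.right := ⟨h2, hd.2⟩
        rw [hSr] at this; exact this
      exact ⟨p.2, ⟨hp2, hp1 ▸ h3⟩, by rw [← hp1]⟩
    · rintro ⟨b, ⟨hb, hab⟩, rfl⟩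
      have haS : a ∈ ({a, b₁, b₂} : Set V) := Or.inl rfl
      have hbS : b ∈ ({a, b₁, b₂} : Set V) := by
        rcases hb with rfl | rfl
        · exact Or.inr (Or.inl rfl)
        · exact Or.inr (Or.inr rfl)
      exact ⟨haS, hbS, hab⟩
  rw [BipartiteGraph.edgeCount, hset,
    Set.ncard_image_of_injective _ (fun x y h => congrArg Prod.snd h),
    ncard_sep_pair hne]

lemma parity_on_triple (g : V → V) {a b₁ b₂ : V}
    (ha : a ∈ Γ.left) (hb₁ : b₁ ∈ Γ.right) (hb₂ : b₂ ∈ Γ.right) (hne : b₁ ≠ b₂)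
    (hga : g a ∈ Γ.left) (hgb₁ : g b₁ ∈ Γ.right) (hgb₂ : g b₂ ∈ Γ.right)
    (hgne : g b₁ ≠ g b₂) :
    Γ.PreservesParityOn g ({a, b₁, b₂} : Set V) ↔
      ((Γ.adj a b₁ ↔ Γ.adj (g a) (g b₁)) ↔ (Γ.adj a b₂ ↔ Γ.adj (g a) (g b₂))) := by
  classical
  have himg : g '' ({a, b₁, b₂} : Set V) = {g a, g b₁, g b₂} := by
    rw [Set.image_insert_eq, Set.image_insert_eq, Set.image_singleton]
  have e1 := edgeCount_triple Γ ha hb₁ hb₂ hne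
  have e2 := edgeCount_triple Γ hga hgb₁ hgb₂ hgne
  rw [BipartiteGraph.PreservesParityOn, himg, e1, e2]
  by_cases h1 : Γ.adj a b₁ <;> by_cases h2 : Γ.adj a b₂ <;>
    by_cases h3 : Γ.adj (g a) (g b₁) <;> by_cases h4 : Γ.adj (g a) (g b₂) <;>
    simp [h1, h2, h3, h4, Nat.even_add]

lemma exists_triple {S : Set V} (h : Γ.IsMNSubgraph S 1 2) :
    ∃ a b₁ b₂ : V, a ∈ Γ.left ∧ b₁ ∈ Γ.right ∧ b₂ ∈ Γ.right ∧ b₁ ≠ b₂ ∧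
      S = {a, b₁, b₂} := by
  obtain ⟨hfin, h1, h2⟩ := h
  obtain ⟨a, hA⟩ := Set.ncard_eq_one.mp h1
  obtain ⟨b₁, b₂, hne, hB⟩ := Set.ncard_eq_two.mp h2
  have ha : a ∈ Γ.left := by
    have : a ∈ S ∩ Γ.left := hA ▸ rfl
    exact this.2
  have hb₁ : b₁ ∈ Γ.right := by
    have : b₁ ∈ S ∩ Γ.right := by rw [hB]; exact Or.inl rfl
    exact this.2
  have hb₂ : b₂ ∈ Γ.right := by
    have : b₂ ∈ S ∩ Γ.right := by rw [hB]; exact Or.inr rfl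
    exact this.2
  refine ⟨a, b₁, b₂, ha, hb₁, hb₂, hne, ?_⟩
  ext x
  constructor
  · intro hx
    rcases mem_left_or_right Γ x with hl | hr
    · have : x ∈ S ∩ Γ.left := ⟨hx, hl⟩
      rw [hA] at this
      exact Or.inl this
    · have : x ∈ S ∩ Γ.right := ⟨hx, hr⟩
      rw [hB] at this
      rcases this with rfl | rfl
      · exact Or.inr (Or.inl rfl)
      · exact Or.inr (Or.inr rfl)
  · rintro (rfl | rfl | rfl)
    · exact (hA ▸ rfl : x ∈ S ∩ Γ.left).1
    · exact ((by rw [hB]; exact Or.inl rfl) : x ∈ S ∩ Γ.right).1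
    · exact ((by rw [hB]; exact Or.inr rfl) : x ∈ S ∩ Γ.right).1

lemma ncard_pair_inter_singleton {a b w : V} (_ha : a ∈ Γ.left) (hb : b ∈ Γ.right)
    (hw : w ∈ Γ.left) : ((({a, b} : Set V) ∩ {w}).ncard ≠ 1) ↔ a ≠ w := by
  have hbw : b ≠ w := fun h => right_not_left Γ hb (h ▸ hw)
  by_cases haw : a = w
  · subst haw
    have : ({a, b} : Set V) ∩ {a} = {a} := by
      ext x
      simp only [Set.mem_inter_iff, Set.mem_insert_iff, Set.mem_singleton_iff]
      constructor
      · exact And.right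
      · rintro rfl; exact ⟨Or.inl rfl, rfl⟩
    simp [this]
  · have : ({a, b} : Set V) ∩ {w} = ∅ := by
      ext x
      simp only [Set.mem_inter_iff, Set.mem_insert_iff, Set.mem_singleton_iff,
        Set.mem_empty_iff_false, iff_false, not_and]
      rintro (rfl | rfl) h
      · exact haw h
      · exact hbw h
    simp [this, haw]

end BG23
namespace BG23

variable {V : Type*}

/-- Strengthened right-extension: avoid a finite set of witnesses. -/
lemma ext_right_avoid (left right : Set V) (adj' : V → V → Prop)
    (hr_inf : right.Infinite)
    (extr : ∀ Y₁ Y₂ : Finset V, ↑Y₁ ⊆ right → ↑Y₂ ⊆ right → Disjoint Y₁ Y₂ →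
      ∃ u ∈ left, (∀ y ∈ Y₁, adj' u y) ∧ (∀ y ∈ Y₂, ¬ adj' u y)) :
    ∀ (T Y₁ Y₂ : Finset V), ↑Y₁ ⊆ right → ↑Y₂ ⊆ right → Disjoint Y₁ Y₂ →
      ∃ u ∈ left, u ∉ T ∧ (∀ y ∈ Y₁, adj' u y) ∧ (∀ y ∈ Y₂, ¬ adj' u y) := by
  classical
  intro T
  induction T using Finset.induction_on with
  | empty =>
    intro Y₁ Y₂ h1 h2 hd
    obtain ⟨u, hu, h⟩ := extr Y₁ Y₂ h1 h2 hd
    exact ⟨u, hu, by simp, h⟩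
  | @insert w T hw ih =>
    intro Y₁ Y₂ h1 h2 hd
    obtain ⟨b, hb, hbY⟩ := hr_inf.exists_notMem_finset (Y₁ ∪ Y₂)
    have hb1 : b ∉ Y₁ := fun h => hbY (Finset.mem_union_left _ h)
    have hb2 : b ∉ Y₂ := fun h => hbY (Finset.mem_union_right _ h)
    obtain ⟨u₁, hu₁l, hu₁T, hp1, hn1⟩ := ih (insert b Y₁) Y₂
      (by push_cast; exact Set.insert_subset hb h1) h2
      (Finset.disjoint_insert_left.mpr ⟨hb2, hd⟩)
    obtain ⟨u₂, hu₂l, hu₂T, hp2, hn2⟩ := ih Y₁ (insert b Y₂) h1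
      (by push_cast; exact Set.insert_subset hb h2)
      (Finset.disjoint_insert_right.mpr ⟨hb1, hd⟩)
    have hne : u₁ ≠ u₂ := by
      intro h
      exact hn2 b (Finset.mem_insert_self _ _) (h ▸ hp1 b (Finset.mem_insert_self _ _))
    by_cases hu : u₁ = w
    · refine ⟨u₂, hu₂l, ?_, hp2, fun y hy => hn2 y (Finset.mem_insert_of_mem hy)⟩
      simp only [Finset.mem_insert, not_or]
      exact ⟨fun h => hne (hu.trans h.symm), hu₂T⟩
    · refine ⟨u₁, hu₁l, ?_, fun y hy => hp1 y (Finset.mem_insert_of_mem hy), hn1⟩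
      simp only [Finset.mem_insert, not_or]
      exact ⟨hu, hu₁T⟩

/-- Strengthened left-extension: avoid a finite set of witnesses. -/
lemma ext_left_avoid (left right : Set V) (adj' : V → V → Prop)
    (hl_inf : left.Infinite)
    (extl : ∀ X₁ X₂ : Finset V, ↑X₁ ⊆ left → ↑X₂ ⊆ left → Disjoint X₁ X₂ →
      ∃ v ∈ right, (∀ x ∈ X₁, adj' x v) ∧ (∀ x ∈ X₂, ¬ adj' x v)) :
    ∀ (T X₁ X₂ : Finset V), ↑X₁ ⊆ left → ↑X₂ ⊆ left → Disjoint X₁ X₂ →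
      ∃ v ∈ right, v ∉ T ∧ (∀ x ∈ X₁, adj' x v) ∧ (∀ x ∈ X₂, ¬ adj' x v) := by
  classical
  exact ext_right_avoid right left (fun v x => adj' x v) hl_inf
    (fun Y₁ Y₂ h1 h2 hd => extl Y₁ Y₂ h1 h2 hd)

end BG23
namespace BG23

open scoped Classical

variable {V : Type*}

/-- A finite partial isomorphism from `Γ` to the structure `adj'`. -/
def Good (Γ : BipartiteGraph V) (adj' : V → V → Prop) (s : Finset V) (f : V → V) : Prop :=
  Set.InjOn f ↑s ∧
  (∀ x ∈ s, (x ∈ Γ.left → f x ∈ Γ.left) ∧ (x ∈ Γ.right → f x ∈ Γ.right)) ∧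
  (∀ a ∈ s, a ∈ Γ.left → ∀ b ∈ s, b ∈ Γ.right → (Γ.adj a b ↔ adj' (f a) (f b)))

lemma forth_step (Γ : BipartiteGraph V) (adj' : V → V → Prop)
    (extl'a : ∀ (T X₁ X₂ : Finset V), ↑X₁ ⊆ Γ.left → ↑X₂ ⊆ Γ.left → Disjoint X₁ X₂ →
      ∃ v ∈ Γ.right, v ∉ T ∧ (∀ x ∈ X₁, adj' x v) ∧ (∀ x ∈ X₂, ¬ adj' x v))
    (extr'a : ∀ (T Y₁ Y₂ : Finset V), ↑Y₁ ⊆ Γ.right → ↑Y₂ ⊆ Γ.right → Disjoint Y₁ Y₂ →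
      ∃ u ∈ Γ.left, u ∉ T ∧ (∀ y ∈ Y₁, adj' u y) ∧ (∀ y ∈ Y₂, ¬ adj' u y))
    {s : Finset V} {f : V → V} (hg : Good Γ adj' s f) (x : V) :
    ∃ f', Good Γ adj' (insert x s) f' ∧ ∀ z ∈ s, f' z = f z := by
  classical
  by_cases hxs : x ∈ s
  · exact ⟨f, by rwa [Finset.insert_eq_self.mpr hxs], fun z _ => rfl⟩
  obtain ⟨hinj, hside, hcross⟩ := hg
  rcases mem_left_or_right Γ x with hx | hx
  · -- x on the left: find an image on the left
    set Y₁ : Finset V := (s.filter (fun b => b ∈ Γ.right ∧ Γ.adj x b)).image f with hY₁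
    set Y₂ : Finset V := (s.filter (fun b => b ∈ Γ.right ∧ ¬ Γ.adj x b)).image f with hY₂
    have hY₁r : ↑Y₁ ⊆ Γ.right := by
      intro u hu
      simp only [hY₁, Finset.coe_image, Set.mem_image, Finset.mem_coe,
        Finset.mem_filter] at hu
      obtain ⟨b, ⟨hbs, hbr, _⟩, rfl⟩ := hu
      exact (hside b hbs).2 hbr
    have hY₂r : ↑Y₂ ⊆ Γ.right := by
      intro u hu
      simp only [hY₂, Finset.coe_image, Set.mem_image, Finset.mem_coe,
        Finset.mem_filter] at hu
      obtain ⟨b, ⟨hbs, hbr, _⟩, rfl⟩ := hu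
      exact (hside b hbs).2 hbr
    have hYd : Disjoint Y₁ Y₂ := by
      rw [Finset.disjoint_left]
      intro u hu1 hu2
      simp only [hY₁, hY₂, Finset.mem_image, Finset.mem_filter] at hu1 hu2
      obtain ⟨b, ⟨hbs, _, hab⟩, rfl⟩ := hu1
      obtain ⟨b', ⟨hbs', _, hab'⟩, hbb⟩ := hu2
      exact hab' (hinj (Finset.mem_coe.mpr hbs') (Finset.mem_coe.mpr hbs) hbb ▸ hab)
    obtain ⟨y, hyl, hyT, hp, hn⟩ := extr'a (s.image f) Y₁ Y₂ hY₁r hY₂r hYd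
    have hyim : ∀ z ∈ s, f z ≠ y := by
      intro z hz h
      exact hyT (h ▸ Finset.mem_image_of_mem f hz)
    refine ⟨Function.update f x y, ⟨?_, ?_, ?_⟩,
      fun z hz => Function.update_of_ne (show z ≠ x from fun h => hxs (h ▸ hz)) _ _⟩
    · intro z hz z' hz' h
      simp only [Finset.coe_insert, Set.mem_insert_iff, Finset.mem_coe] at hz hz'
      rcases hz with rfl | hz <;> rcases hz' with rfl | hz'
      · rfl
      · have hzx : z' ≠ z := fun h' => hxs (h' ▸ hz')
        rw [Function.update_self, Function.update_of_ne hzx] at h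
        exact absurd h.symm (hyim z' hz')
      · have hzx : z ≠ z' := fun h' => hxs (h' ▸ hz)
        rw [Function.update_self, Function.update_of_ne hzx] at h
        exact absurd h (hyim z hz)
      · have hzx : z ≠ x := fun h' => hxs (h' ▸ hz)
        have hzx' : z' ≠ x := fun h' => hxs (h' ▸ hz')
        rw [Function.update_of_ne hzx, Function.update_of_ne hzx'] at h
        exact hinj (Finset.mem_coe.mpr hz) (Finset.mem_coe.mpr hz') h
    · intro z hz
      rcases Finset.mem_insert.mp hz with rfl | hz
      · rw [Function.update_self]
        exact ⟨fun _ => hyl, fun hr => absurd hr (left_not_right Γ hx)⟩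
      · rw [Function.update_of_ne (show z ≠ x from fun h' => hxs (h' ▸ hz))]
        exact hside z hz
    · intro a ha hal b hb hbr
      rcases Finset.mem_insert.mp ha with h1 | has
      · rcases Finset.mem_insert.mp hb with h2 | hbs
        · exact absurd (h2 ▸ hbr) (left_not_right Γ hx)
        · subst h1
          rw [Function.update_self, Function.update_of_ne (show b ≠ a from fun h' => hxs (h' ▸ hbs))]
          by_cases had : Γ.adj a b
          · refine iff_of_true had (hp (f b) ?_)
            exact Finset.mem_image_of_mem f (Finset.mem_filter.mpr ⟨hbs, hbr, had⟩)
          · refine iff_of_false had (hn (f b) ?_)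
            exact Finset.mem_image_of_mem f (Finset.mem_filter.mpr ⟨hbs, hbr, had⟩)
      · rcases Finset.mem_insert.mp hb with h2 | hbs
        · exact absurd (h2 ▸ hbr) (left_not_right Γ hx)
        · rw [Function.update_of_ne (show a ≠ x from fun h' => hxs (h' ▸ has)),
            Function.update_of_ne (show b ≠ x from fun h' => hxs (h' ▸ hbs))]
          exact hcross a has hal b hbs hbr
  · -- x on the right: find an image on the right
    set X₁ : Finset V := (s.filter (fun a => a ∈ Γ.left ∧ Γ.adj a x)).image f with hX₁
    set X₂ : Finset V := (s.filter (fun a => a ∈ Γ.left ∧ ¬ Γ.adj a x)).image f with hX₂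
    have hX₁l : ↑X₁ ⊆ Γ.left := by
      intro u hu
      simp only [hX₁, Finset.coe_image, Set.mem_image, Finset.mem_coe,
        Finset.mem_filter] at hu
      obtain ⟨a, ⟨has, hal, _⟩, rfl⟩ := hu
      exact (hside a has).1 hal
    have hX₂l : ↑X₂ ⊆ Γ.left := by
      intro u hu
      simp only [hX₂, Finset.coe_image, Set.mem_image, Finset.mem_coe,
        Finset.mem_filter] at hu
      obtain ⟨a, ⟨has, hal, _⟩, rfl⟩ := hu
      exact (hside a has).1 hal
    have hXd : Disjoint X₁ X₂ := by
      rw [Finset.disjoint_left]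
      intro u hu1 hu2
      simp only [hX₁, hX₂, Finset.mem_image, Finset.mem_filter] at hu1 hu2
      obtain ⟨a, ⟨has, _, hax⟩, rfl⟩ := hu1
      obtain ⟨a', ⟨has', _, hax'⟩, haa⟩ := hu2
      exact hax' (hinj (Finset.mem_coe.mpr has') (Finset.mem_coe.mpr has) haa ▸ hax)
    obtain ⟨y, hyr, hyT, hp, hn⟩ := extl'a (s.image f) X₁ X₂ hX₁l hX₂l hXd
    have hyim : ∀ z ∈ s, f z ≠ y := by
      intro z hz h
      exact hyT (h ▸ Finset.mem_image_of_mem f hz)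
    refine ⟨Function.update f x y, ⟨?_, ?_, ?_⟩,
      fun z hz => Function.update_of_ne (show z ≠ x from fun h => hxs (h ▸ hz)) _ _⟩
    · intro z hz z' hz' h
      simp only [Finset.coe_insert, Set.mem_insert_iff, Finset.mem_coe] at hz hz'
      rcases hz with rfl | hz <;> rcases hz' with rfl | hz'
      · rfl
      · have hzx : z' ≠ z := fun h' => hxs (h' ▸ hz')
        rw [Function.update_self, Function.update_of_ne hzx] at h
        exact absurd h.symm (hyim z' hz')
      · have hzx : z ≠ z' := fun h' => hxs (h' ▸ hz)
        rw [Function.update_self, Function.update_of_ne hzx] at h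
        exact absurd h (hyim z hz)
      · have hzx : z ≠ x := fun h' => hxs (h' ▸ hz)
        have hzx' : z' ≠ x := fun h' => hxs (h' ▸ hz')
        rw [Function.update_of_ne hzx, Function.update_of_ne hzx'] at h
        exact hinj (Finset.mem_coe.mpr hz) (Finset.mem_coe.mpr hz') h
    · intro z hz
      rcases Finset.mem_insert.mp hz with rfl | hz
      · rw [Function.update_self]
        exact ⟨fun hl => absurd hl (right_not_left Γ hx), fun _ => hyr⟩
      · rw [Function.update_of_ne (show z ≠ x from fun h' => hxs (h' ▸ hz))]
        exact hside z hz
    · intro a ha hal b hb hbr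
      rcases Finset.mem_insert.mp ha with h1 | has
      · exact absurd (h1 ▸ hal) (right_not_left Γ hx)
      · rcases Finset.mem_insert.mp hb with h2 | hbs
        · subst h2
          rw [Function.update_self, Function.update_of_ne (show a ≠ b from fun h' => hxs (h' ▸ has))]
          by_cases had : Γ.adj a b
          · refine iff_of_true had (hp (f a) ?_)
            exact Finset.mem_image_of_mem f (Finset.mem_filter.mpr ⟨has, hal, had⟩)
          · refine iff_of_false had (hn (f a) ?_)
            exact Finset.mem_image_of_mem f (Finset.mem_filter.mpr ⟨has, hal, had⟩)
        · rw [Function.update_of_ne (show a ≠ x from fun h' => hxs (h' ▸ has)),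
            Function.update_of_ne (show b ≠ x from fun h' => hxs (h' ▸ hbs))]
          exact hcross a has hal b hbs hbr

end BG23
namespace BG23

open scoped Classical

variable {V : Type*}

lemma back_step (Γ : BipartiteGraph V) (adj' : V → V → Prop)
    (extlΓa : ∀ (T X₁ X₂ : Finset V), ↑X₁ ⊆ Γ.left → ↑X₂ ⊆ Γ.left → Disjoint X₁ X₂ →
      ∃ v ∈ Γ.right, v ∉ T ∧ (∀ x ∈ X₁, Γ.adj x v) ∧ (∀ x ∈ X₂, ¬ Γ.adj x v))
    (extrΓa : ∀ (T Y₁ Y₂ : Finset V), ↑Y₁ ⊆ Γ.right → ↑Y₂ ⊆ Γ.right → Disjoint Y₁ Y₂ →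
      ∃ u ∈ Γ.left, u ∉ T ∧ (∀ y ∈ Y₁, Γ.adj u y) ∧ (∀ y ∈ Y₂, ¬ Γ.adj u y))
    {s : Finset V} {f : V → V} (hg : Good Γ adj' s f) (y : V)
    (hy : y ∈ Γ.left ∨ y ∈ Γ.right) :
    ∃ s' f', Good Γ adj' s' f' ∧ s ⊆ s' ∧ y ∈ Finset.image f' s' ∧ ∀ z ∈ s, f' z = f z := by
  classical
  by_cases hyim : y ∈ s.image f
  · exact ⟨s, f, hg, Finset.Subset.refl s, hyim, fun z _ => rfl⟩
  obtain ⟨hinj, hside, hcross⟩ := hg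
  rcases hy with hy | hy
  · -- y on the left: find a preimage on the left
    set Y₁ : Finset V := s.filter (fun b => b ∈ Γ.right ∧ adj' y (f b)) with hY₁
    set Y₂ : Finset V := s.filter (fun b => b ∈ Γ.right ∧ ¬ adj' y (f b)) with hY₂
    have hY₁r : ↑Y₁ ⊆ Γ.right := by
      intro u hu
      simp only [hY₁, Finset.coe_filter, Set.mem_setOf_eq] at hu
      exact hu.2.1
    have hY₂r : ↑Y₂ ⊆ Γ.right := by
      intro u hu
      simp only [hY₂, Finset.coe_filter, Set.mem_setOf_eq] at hu
      exact hu.2.1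
    have hYd : Disjoint Y₁ Y₂ := by
      rw [Finset.disjoint_left]
      intro u hu1 hu2
      rw [hY₁, Finset.mem_filter] at hu1
      rw [hY₂, Finset.mem_filter] at hu2
      exact hu2.2.2 hu1.2.2
    obtain ⟨x, hxl, hxs, hp, hn⟩ := extrΓa s Y₁ Y₂ hY₁r hY₂r hYd
    refine ⟨insert x s, Function.update f x y, ⟨?_, ?_, ?_⟩, Finset.subset_insert x s, ?_,
      fun z hz => Function.update_of_ne (show z ≠ x from fun h => hxs (h ▸ hz)) _ _⟩
    · intro z hz z' hz' h
      simp only [Finset.coe_insert, Set.mem_insert_iff, Finset.mem_coe] at hz hz'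
      rcases hz with rfl | hz <;> rcases hz' with rfl | hz'
      · rfl
      · rw [Function.update_self,
          Function.update_of_ne (show z' ≠ z from fun h' => hxs (h' ▸ hz'))] at h
        exact absurd (h ▸ Finset.mem_image_of_mem f hz') hyim
      · rw [Function.update_self,
          Function.update_of_ne (show z ≠ z' from fun h' => hxs (h' ▸ hz))] at h
        exact absurd (h.symm ▸ Finset.mem_image_of_mem f hz) hyim
      · rw [Function.update_of_ne (show z ≠ x from fun h' => hxs (h' ▸ hz)),
          Function.update_of_ne (show z' ≠ x from fun h' => hxs (h' ▸ hz'))] at h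
        exact hinj (Finset.mem_coe.mpr hz) (Finset.mem_coe.mpr hz') h
    · intro z hz
      rcases Finset.mem_insert.mp hz with rfl | hz
      · rw [Function.update_self]
        exact ⟨fun _ => hy, fun hr => absurd hr (left_not_right Γ hxl)⟩
      · rw [Function.update_of_ne (show z ≠ x from fun h' => hxs (h' ▸ hz))]
        exact hside z hz
    · intro a ha hal b hb hbr
      rcases Finset.mem_insert.mp ha with h1 | has
      · rcases Finset.mem_insert.mp hb with h2 | hbs
        · exact absurd (h2 ▸ hbr) (left_not_right Γ hxl)
        · subst h1
          rw [Function.update_self, Function.update_of_ne (show b ≠ a from fun h' => hxs (h' ▸ hbs))]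
          by_cases had : adj' y (f b)
          · exact iff_of_true (hp b (Finset.mem_filter.mpr ⟨hbs, hbr, had⟩)) had
          · exact iff_of_false (hn b (Finset.mem_filter.mpr ⟨hbs, hbr, had⟩)) had
      · rcases Finset.mem_insert.mp hb with h2 | hbs
        · exact absurd (h2 ▸ hbr) (left_not_right Γ hxl)
        · rw [Function.update_of_ne (show a ≠ x from fun h' => hxs (h' ▸ has)),
            Function.update_of_ne (show b ≠ x from fun h' => hxs (h' ▸ hbs))]
          exact hcross a has hal b hbs hbr
    · refine Finset.mem_image.mpr ⟨x, Finset.mem_insert_self x s, Function.update_self x y f⟩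
  · -- y on the right: find a preimage on the right
    set X₁ : Finset V := s.filter (fun a => a ∈ Γ.left ∧ adj' (f a) y) with hX₁
    set X₂ : Finset V := s.filter (fun a => a ∈ Γ.left ∧ ¬ adj' (f a) y) with hX₂
    have hX₁l : ↑X₁ ⊆ Γ.left := by
      intro u hu
      simp only [hX₁, Finset.coe_filter, Set.mem_setOf_eq] at hu
      exact hu.2.1
    have hX₂l : ↑X₂ ⊆ Γ.left := by
      intro u hu
      simp only [hX₂, Finset.coe_filter, Set.mem_setOf_eq] at hu
      exact hu.2.1
    have hXd : Disjoint X₁ X₂ := by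
      rw [Finset.disjoint_left]
      intro u hu1 hu2
      rw [hX₁, Finset.mem_filter] at hu1
      rw [hX₂, Finset.mem_filter] at hu2
      exact hu2.2.2 hu1.2.2
    obtain ⟨x, hxr, hxs, hp, hn⟩ := extlΓa s X₁ X₂ hX₁l hX₂l hXd
    refine ⟨insert x s, Function.update f x y, ⟨?_, ?_, ?_⟩, Finset.subset_insert x s, ?_,
      fun z hz => Function.update_of_ne (show z ≠ x from fun h => hxs (h ▸ hz)) _ _⟩
    · intro z hz z' hz' h
      simp only [Finset.coe_insert, Set.mem_insert_iff, Finset.mem_coe] at hz hz'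
      rcases hz with rfl | hz <;> rcases hz' with rfl | hz'
      · rfl
      · rw [Function.update_self,
          Function.update_of_ne (show z' ≠ z from fun h' => hxs (h' ▸ hz'))] at h
        exact absurd (h ▸ Finset.mem_image_of_mem f hz') hyim
      · rw [Function.update_self,
          Function.update_of_ne (show z ≠ z' from fun h' => hxs (h' ▸ hz))] at h
        exact absurd (h.symm ▸ Finset.mem_image_of_mem f hz) hyim
      · rw [Function.update_of_ne (show z ≠ x from fun h' => hxs (h' ▸ hz)),
          Function.update_of_ne (show z' ≠ x from fun h' => hxs (h' ▸ hz'))] at h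
        exact hinj (Finset.mem_coe.mpr hz) (Finset.mem_coe.mpr hz') h
    · intro z hz
      rcases Finset.mem_insert.mp hz with rfl | hz
      · rw [Function.update_self]
        exact ⟨fun hl => absurd hl (right_not_left Γ hxr), fun _ => hy⟩
      · rw [Function.update_of_ne (show z ≠ x from fun h' => hxs (h' ▸ hz))]
        exact hside z hz
    · intro a ha hal b hb hbr
      rcases Finset.mem_insert.mp ha with h1 | has
      · exact absurd (h1 ▸ hal) (right_not_left Γ hxr)
      · rcases Finset.mem_insert.mp hb with h2 | hbs
        · subst h2
          rw [Function.update_self, Function.update_of_ne (show a ≠ b from fun h' => hxs (h' ▸ has))]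
          by_cases had : adj' (f a) y
          · exact iff_of_true (hp a (Finset.mem_filter.mpr ⟨has, hal, had⟩)) had
          · exact iff_of_false (hn a (Finset.mem_filter.mpr ⟨has, hal, had⟩)) had
        · rw [Function.update_of_ne (show a ≠ x from fun h' => hxs (h' ▸ has)),
            Function.update_of_ne (show b ≠ x from fun h' => hxs (h' ▸ hbs))]
          exact hcross a has hal b hbs hbr
    · exact Finset.mem_image.mpr ⟨x, Finset.mem_insert_self x s, Function.update_self x y f⟩

end BG23
namespace BG23

open scoped Classical

/-- Iterate a step function. -/
noncomputable def natChain {α : Type*} (init : α) (next : ℕ → α → α) : ℕ → α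
  | 0 => init
  | n + 1 => next n (natChain init next n)

variable {V : Type*}

/-- Back-and-forth: any finite partial isomorphism from the random bipartite
graph `Γ` to a structure `adj'` on the same sides satisfying the extension
properties extends to a global isomorphism. -/
lemma exists_extension (Γ : BipartiteGraph V) (hΓ : Γ.IsRandom)
    (adj' : V → V → Prop)
    (extl' : ∀ X₁ X₂ : Finset V, ↑X₁ ⊆ Γ.left → ↑X₂ ⊆ Γ.left → Disjoint X₁ X₂ →
      ∃ v ∈ Γ.right, (∀ x ∈ X₁, adj' x v) ∧ (∀ x ∈ X₂, ¬ adj' x v))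
    (extr' : ∀ Y₁ Y₂ : Finset V, ↑Y₁ ⊆ Γ.right → ↑Y₂ ⊆ Γ.right → Disjoint Y₁ Y₂ →
      ∃ u ∈ Γ.left, (∀ y ∈ Y₁, adj' u y) ∧ (∀ y ∈ Y₂, ¬ adj' u y))
    (s₀ : Finset V) (f₀ : V → V) (hgood : Good Γ adj' s₀ f₀) :
    ∃ g : Equiv.Perm V, (∀ x ∈ s₀, g x = f₀ x) ∧ g ∈ Γ.symLR ∧
      ∀ a ∈ Γ.left, ∀ b ∈ Γ.right, (Γ.adj a b ↔ adj' (g a) (g b)) := by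
  classical
  -- avoid-versions of the extension properties
  have extl'a := ext_left_avoid Γ.left Γ.right adj' hΓ.left_infinite extl'
  have extr'a := ext_right_avoid Γ.left Γ.right adj' hΓ.right_infinite extr'
  have extlΓa := ext_left_avoid Γ.left Γ.right Γ.adj hΓ.left_infinite hΓ.ext_left
  have extrΓa := ext_right_avoid Γ.left Γ.right Γ.adj hΓ.right_infinite hΓ.ext_right
  -- an enumeration of the vertices
  have : Countable V := hΓ.countable
  have : Nonempty V := ⟨hΓ.left_infinite.nonempty.choose⟩
  obtain ⟨e, he⟩ := exists_surjective_nat V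
  -- the combined step
  have step : ∀ (n : ℕ) (p : Finset V × (V → V)), Good Γ adj' p.1 p.2 →
      ∃ q : Finset V × (V → V), Good Γ adj' q.1 q.2 ∧ p.1 ⊆ q.1 ∧ e n ∈ q.1 ∧
        e n ∈ Finset.image q.2 q.1 ∧ ∀ z ∈ p.1, q.2 z = p.2 z := by
    intro n p hp
    obtain ⟨f', hf', hagree⟩ := forth_step Γ adj' extl'a extr'a hp (e n)
    obtain ⟨s'', f'', hg'', hsub'', him'', hagree''⟩ :=
      back_step Γ adj' extlΓa extrΓa hf' (e n) (mem_left_or_right Γ (e n))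
    refine ⟨(s'', f''), hg'', ?_, hsub'' (Finset.mem_insert_self _ _), him'', ?_⟩
    · exact fun z hz => hsub'' (Finset.mem_insert_of_mem hz)
    · intro z hz
      show f'' z = p.2 z
      rw [hagree'' z (Finset.mem_insert_of_mem hz), hagree z hz]
  -- the chain
  let next : ℕ → Finset V × (V → V) → Finset V × (V → V) := fun n p =>
    if h : Good Γ adj' p.1 p.2 then (step n p h).choose else p
  let c : ℕ → Finset V × (V → V) := natChain (s₀, f₀) next
  have hc0 : c 0 = (s₀, f₀) := rfl
  have hgoodc : ∀ n, Good Γ adj' (c n).1 (c n).2 := by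
    intro n
    induction n with
    | zero => exact hgood
    | succ n ih =>
      have : c (n + 1) = next n (c n) := rfl
      rw [this]
      simp only [next, dif_pos ih]
      exact (step n (c n) ih).choose_spec.1
  have hstep : ∀ n, (c n).1 ⊆ (c (n + 1)).1 ∧ e n ∈ (c (n + 1)).1 ∧
      e n ∈ Finset.image (c (n + 1)).2 (c (n + 1)).1 ∧
      ∀ z ∈ (c n).1, (c (n + 1)).2 z = (c n).2 z := by
    intro n
    have h1 : c (n + 1) = next n (c n) := rfl
    rw [h1]
    simp only [next, dif_pos (hgoodc n)]
    exact (step n (c n) (hgoodc n)).choose_spec.2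
  have hmono : ∀ m n, m ≤ n → (c m).1 ⊆ (c n).1 := by
    intro m n h
    induction n, h using Nat.le_induction with
    | base => exact Finset.Subset.refl _
    | succ n _ ih => exact ih.trans (hstep n).1
  have hagree : ∀ m n, m ≤ n → ∀ z ∈ (c m).1, (c n).2 z = (c m).2 z := by
    intro m n h
    induction n, h using Nat.le_induction with
    | base => exact fun z _ => rfl
    | succ n hmn ih =>
      intro z hz
      rw [(hstep n).2.2.2 z (hmono m n hmn hz), ih z hz]
  -- the limit bijection
  have hin : ∀ x : V, ∃ n, x ∈ (c n).1 := by
    intro x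
    obtain ⟨n, rfl⟩ := he x
    exact ⟨n + 1, (hstep n).2.1⟩
  let N : V → ℕ := fun x => Nat.find (hin x)
  let F : V → V := fun x => (c (N x)).2 x
  have hNmem : ∀ x, x ∈ (c (N x)).1 := fun x => Nat.find_spec (hin x)
  have hF : ∀ m, ∀ x ∈ (c m).1, F x = (c m).2 x := by
    intro m x hx
    have h1 : N x ≤ max (N x) m := le_max_left _ _
    have h2 : m ≤ max (N x) m := le_max_right _ _
    have e1 := hagree (N x) (max (N x) m) h1 x (hNmem x)
    have e2 := hagree m (max (N x) m) h2 x hx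
    simp only [F]
    rw [← e1, e2]
  have hFinj : Function.Injective F := by
    intro x y h
    set m := max (N x) (N y) with hm
    have hx : x ∈ (c m).1 := hmono (N x) m (le_max_left _ _) (hNmem x)
    have hy : y ∈ (c m).1 := hmono (N y) m (le_max_right _ _) (hNmem y)
    rw [hF m x hx, hF m y hy] at h
    exact (hgoodc m).1 (Finset.mem_coe.mpr hx) (Finset.mem_coe.mpr hy) h
  have hFsurj : Function.Surjective F := by
    intro y
    obtain ⟨n, rfl⟩ := he y
    obtain ⟨x, hx, hfx⟩ := Finset.mem_image.mp (hstep n).2.2.1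
    exact ⟨x, (hF (n + 1) x hx).trans hfx⟩
  let g : Equiv.Perm V := Equiv.ofBijective F ⟨hFinj, hFsurj⟩
  have hgF : ∀ x, g x = F x := fun x => rfl
  have hsides : ∀ x, (x ∈ Γ.left → g x ∈ Γ.left) ∧ (x ∈ Γ.right → g x ∈ Γ.right) := by
    intro x
    have hx := hNmem x
    have := ((hgoodc (N x)).2.1) x hx
    rw [hgF x, hF (N x) x hx]
    exact this
  refine ⟨g, ?_, ⟨?_, ?_⟩, ?_⟩
  · intro x hx
    rw [hgF x, hF 0 x (by rwa [hc0])]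
    rw [hc0]
  · intro v
    constructor
    · intro h
      rcases mem_left_or_right Γ v with hl | hr
      · exact hl
      · exact absurd h (right_not_left Γ ((hsides v).2 hr))
    · exact (hsides v).1
  · intro v
    constructor
    · intro h
      rcases mem_left_or_right Γ v with hl | hr
      · exact absurd h (left_not_right Γ ((hsides v).1 hl))
      · exact hr
    · exact (hsides v).2
  · intro a ha b hb
    set m := max (N a) (N b) with hm
    have hx : a ∈ (c m).1 := hmono (N a) m (le_max_left _ _) (hNmem a)
    have hy : b ∈ (c m).1 := hmono (N b) m (le_max_right _ _) (hNmem b)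
    rw [hgF a, hgF b, hF m a hx, hF m b hy]
    exact (hgoodc m).2.2 a hx ha b hy hb

end BG23
namespace BG23

open scoped Classical

variable {V : Type*}

/-- Any finite partial automorphism of the random bipartite graph extends to a
full automorphism. -/
lemma exists_aut_extension (Γ : BipartiteGraph V) (hΓ : Γ.IsRandom)
    (s₀ : Finset V) (f₀ : V → V) (hgood : Good Γ Γ.adj s₀ f₀) :
    ∃ g : Equiv.Perm V, (∀ x ∈ s₀, g x = f₀ x) ∧ g ∈ Γ.autGroup := by
  obtain ⟨g, hagree, hsym, hcross⟩ :=
    exists_extension Γ hΓ Γ.adj hΓ.ext_left hΓ.ext_right s₀ f₀ hgood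
  refine ⟨g, hagree, hsym, ?_⟩
  intro a b
  by_cases ha : a ∈ Γ.left
  · by_cases hb : b ∈ Γ.right
    · exact hcross a ha b hb
    · constructor
      · intro h; exact absurd (Γ.adj_dom a b h).2 hb
      · intro h
        exact absurd ((hsym.2 (b)).mp (Γ.adj_dom _ _ h).2) hb
  · constructor
    · intro h; exact absurd (Γ.adj_dom a b h).1 ha
    · intro h
      exact absurd ((hsym.1 (a)).mp (Γ.adj_dom _ _ h).1) ha

/-- Single-vertex switches exist with respect to any left vertex. -/
lemma exists_single_switch (Γ : BipartiteGraph V) (hΓ : Γ.IsRandom)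
    {w : V} (hw : w ∈ Γ.left) : ∃ g : Equiv.Perm V, Γ.IsSwitch g {w} := by
  classical
  -- the flipped structure
  set adj' : V → V → Prop :=
    fun x y => if x = w then (y ∈ Γ.right ∧ ¬ Γ.adj x y) else Γ.adj x y with hadj'
  have extrΓa := ext_right_avoid Γ.left Γ.right Γ.adj hΓ.right_infinite hΓ.ext_right
  have extl' : ∀ X₁ X₂ : Finset V, ↑X₁ ⊆ Γ.left → ↑X₂ ⊆ Γ.left → Disjoint X₁ X₂ →
      ∃ v ∈ Γ.right, (∀ x ∈ X₁, adj' x v) ∧ (∀ x ∈ X₂, ¬ adj' x v) := by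
    intro X₁ X₂ h1 h2 hd
    by_cases hw1 : w ∈ X₁
    · obtain ⟨v, hv, hp, hn⟩ := hΓ.ext_left (X₁.erase w) (insert w X₂)
        (fun x hx => h1 (Finset.mem_coe.mpr (Finset.mem_of_mem_erase (Finset.mem_coe.mp hx))))
        (by push_cast; exact Set.insert_subset hw h2)
        (by
          rw [Finset.disjoint_left]
          intro x hx hx'
          rcases Finset.mem_insert.mp hx' with rfl | hx'
          · exact Finset.notMem_erase x X₁ hx
          · exact Finset.disjoint_left.mp hd (Finset.mem_of_mem_erase hx) hx')
      refine ⟨v, hv, ?_, ?_⟩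
      · intro x hx
        by_cases hxw : x = w
        · subst hxw
          simp only [hadj', if_pos rfl]
          exact ⟨hv, hn x (Finset.mem_insert_self _ _)⟩
        · simp only [hadj', if_neg hxw]
          exact hp x (Finset.mem_erase.mpr ⟨hxw, hx⟩)
      · intro x hx
        have hxw : x ≠ w := fun h => Finset.disjoint_left.mp hd (h ▸ hw1) hx
        simp only [hadj', if_neg hxw]
        exact hn x (Finset.mem_insert_of_mem hx)
    · by_cases hw2 : w ∈ X₂
      · obtain ⟨v, hv, hp, hn⟩ := hΓ.ext_left (insert w X₁) (X₂.erase w)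
          (by push_cast; exact Set.insert_subset hw h1)
          (fun x hx => h2 (Finset.mem_coe.mpr (Finset.mem_of_mem_erase (Finset.mem_coe.mp hx))))
          (by
            rw [Finset.disjoint_left]
            intro x hx hx'
            rcases Finset.mem_insert.mp hx with rfl | hx
            · exact Finset.notMem_erase x X₂ hx'
            · exact Finset.disjoint_left.mp hd hx (Finset.mem_of_mem_erase hx'))
        refine ⟨v, hv, ?_, ?_⟩
        · intro x hx
          have hxw : x ≠ w := fun h => hw1 (h ▸ hx)
          simp only [hadj', if_neg hxw]
          exact hp x (Finset.mem_insert_of_mem hx)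
        · intro x hx
          by_cases hxw : x = w
          · subst hxw
            simp only [hadj', if_pos rfl, not_and, not_not]
            intro _
            exact hp x (Finset.mem_insert_self _ _)
          · simp only [hadj', if_neg hxw]
            exact hn x (Finset.mem_erase.mpr ⟨hxw, hx⟩)
      · obtain ⟨v, hv, hp, hn⟩ := hΓ.ext_left X₁ X₂ h1 h2 hd
        refine ⟨v, hv, ?_, ?_⟩
        · intro x hx
          simp only [hadj', if_neg (show x ≠ w from fun h => hw1 (h ▸ hx))]
          exact hp x hx
        · intro x hx
          simp only [hadj', if_neg (show x ≠ w from fun h => hw2 (h ▸ hx))]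
          exact hn x hx
  have extr' : ∀ Y₁ Y₂ : Finset V, ↑Y₁ ⊆ Γ.right → ↑Y₂ ⊆ Γ.right → Disjoint Y₁ Y₂ →
      ∃ u ∈ Γ.left, (∀ y ∈ Y₁, adj' u y) ∧ (∀ y ∈ Y₂, ¬ adj' u y) := by
    intro Y₁ Y₂ h1 h2 hd
    obtain ⟨u, hu, huw, hp, hn⟩ := extrΓa {w} Y₁ Y₂ h1 h2 hd
    have huw' : u ≠ w := fun h => huw (h ▸ Finset.mem_singleton_self w)
    refine ⟨u, hu, ?_, ?_⟩
    · intro y hy; simp only [hadj', if_neg huw']; exact hp y hy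
    · intro y hy; simp only [hadj', if_neg huw']; exact hn y hy
  have hgood : Good Γ adj' {w} id := by
    refine ⟨Set.injOn_id _, ?_, ?_⟩
    · intro x hx
      exact ⟨fun h => h, fun h => h⟩
    · intro a ha hal b hb hbr
      rw [Finset.mem_singleton] at ha hb
      subst ha; subst hb
      exact absurd hbr (left_not_right Γ hal)
  obtain ⟨g, hagree, hsym, hcross⟩ :=
    exists_extension Γ hΓ adj' extl' extr' {w} id hgood
  have hgw : g w = w := hagree w (Finset.mem_singleton_self w)
  refine ⟨g, hsym, ?_⟩
  intro a ha b hb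
  rw [ncard_pair_inter_singleton Γ ha hb hw]
  by_cases haw : a = w
  · subst haw
    have h := hcross a ha b hb
    have hgb : g b ∈ Γ.right := (hsym.2 b).mpr hb
    rw [hadj'] at h
    simp only [hgw, eq_self_iff_true, if_true] at h
    have hflip : Γ.adj a b ↔ ¬ Γ.adj a (g b) :=
      ⟨fun hab => (h.mp hab).2, fun hn => h.mpr ⟨hgb, hn⟩⟩
    rw [hgw]
    simp only [ne_eq, not_true_eq_false, iff_false]
    tauto
  · have h := hcross a ha b hb
    have hgaw : g a ≠ w := fun hc => haw (g.injective (hc.trans hgw.symm))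
    rw [hadj'] at h
    simp only [if_neg hgaw] at h
    exact iff_of_true h haw

end BG23
namespace BG23

open scoped Classical

variable {V : Type*}

lemma isMN_image (Γ : BipartiteGraph V) {τ : Equiv.Perm V} (hτ : τ ∈ Γ.symLR)
    {S : Set V} (h : Γ.IsMNSubgraph S 1 2) : Γ.IsMNSubgraph (⇑τ '' S) 1 2 := by
  obtain ⟨a, b₁, b₂, ha, hb₁, hb₂, hne, rfl⟩ := exists_triple Γ h
  have himg : ⇑τ '' ({a, b₁, b₂} : Set V) = {τ a, τ b₁, τ b₂} := by
    rw [Set.image_insert_eq, Set.image_insert_eq, Set.image_singleton]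
  rw [himg]
  exact isMNSubgraph_triple Γ ((hτ.1 a).mpr ha) ((hτ.2 b₁).mpr hb₁) ((hτ.2 b₂).mpr hb₂)
    (fun h' => hne (τ.injective h'))

lemma edgeCount_image_of_aut (Γ : BipartiteGraph V) {g : Equiv.Perm V}
    (hg : g ∈ Γ.autGroup) (S : Set V) : Γ.edgeCount (⇑g '' S) = Γ.edgeCount S := by
  have hset : {p : V × V | p.1 ∈ ⇑g '' S ∧ p.2 ∈ ⇑g '' S ∧ Γ.adj p.1 p.2}
      = Prod.map ⇑g ⇑g '' {p : V × V | p.1 ∈ S ∧ p.2 ∈ S ∧ Γ.adj p.1 p.2} := by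
    ext ⟨x, y⟩
    constructor
    · rintro ⟨⟨a, ha, rfl⟩, ⟨b, hb, rfl⟩, hadj⟩
      exact ⟨(a, b), ⟨ha, hb, (hg.2 a b).mpr hadj⟩, rfl⟩
    · rintro ⟨⟨a, b⟩, ⟨ha, hb, hadj⟩, heq⟩
      cases heq
      exact ⟨⟨a, ha, rfl⟩, ⟨b, hb, rfl⟩, (hg.2 a b).mp hadj⟩
  rw [BipartiteGraph.edgeCount, BipartiteGraph.edgeCount, hset,
    Set.ncard_image_of_injective _ (g.injective.prodMap g.injective)]

/-- The subgroup of side-preserving permutations preserving parity on all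
`(1×2)`-subgraphs. -/
def parityGroup (Γ : BipartiteGraph V) : Subgroup (Equiv.Perm V) where
  carrier := {σ | σ ∈ Γ.symLR ∧
    ∀ S : Set V, Γ.IsMNSubgraph S 1 2 → Γ.PreservesParityOn (⇑σ) S}
  one_mem' := by
    refine ⟨Γ.symLR.one_mem, fun S _ => ?_⟩
    unfold BipartiteGraph.PreservesParityOn
    rw [Equiv.Perm.coe_one, Set.image_id]
  mul_mem' := by
    rintro σ τ ⟨hσ1, hσ2⟩ ⟨hτ1, hτ2⟩
    refine ⟨Γ.symLR.mul_mem hσ1 hτ1, fun S hS => ?_⟩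
    unfold BipartiteGraph.PreservesParityOn
    rw [Equiv.Perm.coe_mul, Set.image_comp]
    exact (hτ2 S hS).trans (hσ2 _ (isMN_image Γ hτ1 hS))
  inv_mem' := by
    rintro σ ⟨hσ1, hσ2⟩
    refine ⟨Γ.symLR.inv_mem hσ1, fun S hS => ?_⟩
    have hinv : σ⁻¹ ∈ Γ.symLR := Γ.symLR.inv_mem hσ1
    have h := hσ2 _ (isMN_image Γ hinv hS)
    unfold BipartiteGraph.PreservesParityOn at h ⊢
    have himg : ⇑σ '' (⇑σ⁻¹ '' S) = S := by
      rw [← Set.image_comp]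
      have : ⇑σ ∘ ⇑σ⁻¹ = id := by
        funext x
        exact σ.apply_symm_apply x
      rw [this, Set.image_id]
    rw [himg] at h
    exact h.symm

lemma parityGroup_closed (Γ : BipartiteGraph V) : IsClosedSubgroup (parityGroup Γ) := by
  intro g hg
  constructor
  · constructor
    · intro v
      obtain ⟨h, hmem, hagree⟩ := hg {v}
      rw [← hagree v (Finset.mem_singleton_self v)]
      exact hmem.1.1 v
    · intro v
      obtain ⟨h, hmem, hagree⟩ := hg {v}
      rw [← hagree v (Finset.mem_singleton_self v)]
      exact hmem.1.2 v
  · intro S hS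
    obtain ⟨a, b₁, b₂, ha, hb₁, hb₂, hne, rfl⟩ := exists_triple Γ hS
    obtain ⟨h, hmem, hagree⟩ := hg {a, b₁, b₂}
    have hea : h a = g a := hagree a (by simp)
    have heb₁ : h b₁ = g b₁ := hagree b₁ (by simp)
    have heb₂ : h b₂ = g b₂ := hagree b₂ (by simp)
    have himg : ⇑g '' ({a, b₁, b₂} : Set V) = ⇑h '' ({a, b₁, b₂} : Set V) := by
      rw [Set.image_insert_eq, Set.image_insert_eq, Set.image_singleton,
        Set.image_insert_eq, Set.image_insert_eq, Set.image_singleton,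
        hea, heb₁, heb₂]
    unfold BipartiteGraph.PreservesParityOn
    rw [himg]
    exact hmem.2 _ hS

lemma aut_subset_parityGroup (Γ : BipartiteGraph V) :
    (Γ.autGroup : Set (Equiv.Perm V)) ⊆ ↑(parityGroup Γ) := by
  intro g hg
  refine ⟨hg.1, fun S _ => ?_⟩
  unfold BipartiteGraph.PreservesParityOn
  rw [edgeCount_image_of_aut Γ hg S]

lemma switch_mem_parityGroup (Γ : BipartiteGraph V) {g : Equiv.Perm V} {v : V}
    (hv : v ∈ Γ.left) (hg : Γ.IsSwitch g {v}) : g ∈ parityGroup Γ := by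
  refine ⟨hg.1, fun S hS => ?_⟩
  obtain ⟨a, b₁, b₂, ha, hb₁, hb₂, hne, rfl⟩ := exists_triple Γ hS
  rw [parity_on_triple Γ ⇑g ha hb₁ hb₂ hne ((hg.1.1 a).mpr ha) ((hg.1.2 b₁).mpr hb₁)
    ((hg.1.2 b₂).mpr hb₂) (fun h' => hne (g.injective h'))]
  have h1 := hg.2 a ha b₁ hb₁
  have h2 := hg.2 a ha b₂ hb₂
  rw [ncard_pair_inter_singleton Γ ha hb₁ hv] at h1
  rw [ncard_pair_inter_singleton Γ ha hb₂ hv] at h2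
  rw [h1, h2]

end BG23
/-- **Lemma 2.3.** `S_{l}(Γ)` is exactly the set of side-preserving
permutations which preserve the parity of cross-types in every
`(1 × 2)`-subgraph of `Γ`. -/
theorem switchGroup_l_eq_parity_preservers {V : Type*} (Γ : BipartiteGraph V)
    (hΓ : Γ.IsRandom) :
    (Γ.switchGroup {BSide.l} : Set (Equiv.Perm V)) =
      {σ : Equiv.Perm V | σ ∈ Γ.symLR ∧
        ∀ S : Set V, Γ.IsMNSubgraph S 1 2 → Γ.PreservesParityOn (⇑σ) S} := by
  classical
  ext σ
  simp only [Set.mem_setOf_eq, SetLike.mem_coe]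
  constructor
  · -- the switch group is contained in the parity preservers
    intro hσ
    have hmem : σ ∈ BG23.parityGroup Γ := by
      refine Subgroup.mem_sInf.mp hσ (BG23.parityGroup Γ)
        ⟨BG23.parityGroup_closed Γ, Set.union_subset (BG23.aut_subset_parityGroup Γ) ?_⟩
      rintro g ⟨i, hi, v, hv, hsw⟩
      rcases hi
      exact BG23.switch_mem_parityGroup Γ hv hsw
    exact hmem
  · -- the parity preservers are contained in the switch group
    rintro ⟨hσ1, hσ2⟩
    rw [BipartiteGraph.switchGroup, closedClosure]
    refine Subgroup.mem_sInf.mpr ?_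
    rintro G ⟨hGc, hGg⟩
    -- σ is a switch with respect to the set A
    set A : Set V := {a | a ∈ Γ.left ∧ ∃ b ∈ Γ.right, ¬(Γ.adj a b ↔ Γ.adj (σ a) (σ b))}
      with hAdef
    have hA : ∀ a ∈ Γ.left, ∀ b ∈ Γ.right,
        ((Γ.adj a b ↔ Γ.adj (σ a) (σ b)) ↔ a ∉ A) := by
      intro a ha b hb
      constructor
      · intro hiff haA
        obtain ⟨-, b', hb', hflip⟩ := haA
        by_cases hbb : b' = b
        · exact hflip (hbb ▸ hiff)
        · have hmn := BG23.isMNSubgraph_triple Γ ha hb hb' (fun h => hbb h.symm)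
          have hp := hσ2 _ hmn
          rw [BG23.parity_on_triple Γ ⇑σ ha hb hb' (fun h => hbb h.symm)
            ((hσ1.1 a).mpr ha) ((hσ1.2 b).mpr hb) ((hσ1.2 b').mpr hb')
            (fun h => hbb (σ.injective h).symm)] at hp
          exact hflip (hp.mp hiff)
      · intro hnA
        by_contra hflip
        exact hnA ⟨ha, b, hb, hflip⟩
    -- generators belong to G
    have hswitchgen : ∀ v ∈ Γ.left, ∀ g : Equiv.Perm V, Γ.IsSwitch g {v} → g ∈ G := by
      intro v hv g hsw
      exact hGg (Or.inr ⟨BSide.l, rfl, v, hv, hsw⟩)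
    have hautgen : ∀ g : Equiv.Perm V, g ∈ Γ.autGroup → g ∈ G := fun g hg => hGg (Or.inl hg)
    -- switches with respect to arbitrary finite subsets of the left side
    have switchC : ∀ C : Finset V, ↑C ⊆ Γ.left → ∃ τ : Equiv.Perm V, τ ∈ G ∧ τ ∈ Γ.symLR ∧
        ∀ a ∈ Γ.left, ∀ b ∈ Γ.right, ((Γ.adj a b ↔ Γ.adj (τ a) (τ b)) ↔ a ∉ C) := by
      intro C
      induction C using Finset.induction_on with
      | empty =>
        intro _
        refine ⟨1, G.one_mem, Γ.symLR.one_mem, ?_⟩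
        intro a _ b _
        simp
      | @insert w C hw ih =>
        intro hsub
        have hwl : w ∈ Γ.left := hsub (Finset.mem_coe.mpr (Finset.mem_insert_self w C))
        obtain ⟨τ, hτG, hτsym, hτ⟩ :=
          ih (fun x hx => hsub (Finset.mem_coe.mpr
            (Finset.mem_insert_of_mem (Finset.mem_coe.mp hx))))
        have hτw : τ w ∈ Γ.left := (hτsym.1 w).mpr hwl
        obtain ⟨g, hg⟩ := BG23.exists_single_switch Γ hΓ hτw
        refine ⟨g * τ, G.mul_mem (hswitchgen (τ w) hτw g hg) hτG,
          Γ.symLR.mul_mem hg.1 hτsym, ?_⟩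
        intro a ha b hb
        have h1 := hτ a ha b hb
        have h2 := hg.2 (τ a) ((hτsym.1 a).mpr ha) (τ b) ((hτsym.2 b).mpr hb)
        rw [BG23.ncard_pair_inter_singleton Γ ((hτsym.1 a).mpr ha) ((hτsym.2 b).mpr hb) hτw]
          at h2
        have haw : τ a ≠ τ w ↔ a ≠ w :=
          not_congr ⟨fun h => τ.injective h, fun h => h ▸ rfl⟩
        rw [haw] at h2
        simp only [Equiv.Perm.mul_apply, Finset.mem_insert, not_or]
        by_cases hc : a ∈ C <;> by_cases haw2 : a = w <;>
          simp only [hc, haw2, not_true_eq_false, not_false_eq_true, iff_true, iff_false,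
            and_true, and_false, true_and, false_and] at h1 h2 ⊢ <;> tauto
    -- approximate σ on every finite set by an element of G
    apply hGc σ
    intro F
    set C : Finset V := F.filter (fun a => a ∈ A) with hC
    have hCl : ↑C ⊆ Γ.left := by
      intro x hx
      exact ((Finset.mem_filter.mp (Finset.mem_coe.mp hx)).2).1
    obtain ⟨τ, hτG, hτsym, hτ⟩ := switchC C hCl
    set s₁ : Finset V := F.image ⇑τ with hs₁
    set f₁ : V → V := fun x => σ (τ⁻¹ x) with hf₁
    have hgood : BG23.Good Γ Γ.adj s₁ f₁ := by
      refine ⟨?_, ?_, ?_⟩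
      · intro x _ y _ h
        exact τ⁻¹.injective (σ.injective h)
      · intro x _
        constructor
        · intro hx
          have h1 : τ⁻¹ x ∈ Γ.left := by
            have h2 := hτsym.1 (τ⁻¹ x)
            rw [Equiv.Perm.coe_inv, Equiv.apply_symm_apply] at h2
            exact h2.mp hx
          exact (hσ1.1 _).mpr h1
        · intro hx
          have h1 : τ⁻¹ x ∈ Γ.right := by
            have h2 := hτsym.2 (τ⁻¹ x)
            rw [Equiv.Perm.coe_inv, Equiv.apply_symm_apply] at h2
            exact h2.mp hx
          exact (hσ1.2 _).mpr h1
      · intro a ha hal b hb hbr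
        obtain ⟨a', ha'F, rfl⟩ := Finset.mem_image.mp ha
        obtain ⟨b', hb'F, rfl⟩ := Finset.mem_image.mp hb
        have ha'l : a' ∈ Γ.left := (hτsym.1 a').mp hal
        have hb'r : b' ∈ Γ.right := (hτsym.2 b').mp hbr
        have e1 : f₁ (τ a') = σ a' := by
          simp only [hf₁, Equiv.Perm.coe_inv, Equiv.symm_apply_apply]
        have e2 : f₁ (τ b') = σ b' := by
          simp only [hf₁, Equiv.Perm.coe_inv, Equiv.symm_apply_apply]
        rw [e1, e2]
        have h1 := hτ a' ha'l b' hb'r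
        have h2 := hA a' ha'l b' hb'r
        have hCA : a' ∈ C ↔ a' ∈ A := by
          simp only [hC, Finset.mem_filter, ha'F, true_and]
        have key : (Γ.adj a' b' ↔ Γ.adj (σ a') (σ b')) ↔
            (Γ.adj a' b' ↔ Γ.adj (τ a') (τ b')) :=
          (h2.trans (not_congr hCA).symm).trans h1.symm
        clear h1 h2 hCA
        revert key
        generalize Γ.adj a' b' = P
        generalize Γ.adj (σ a') (σ b') = Q
        generalize Γ.adj (τ a') (τ b') = R
        intro key
        tauto
    obtain ⟨α, hαagree, hαaut⟩ := BG23.exists_aut_extension Γ hΓ s₁ f₁ hgood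
    refine ⟨α * τ, G.mul_mem (hautgen α hαaut) hτG, ?_⟩
    intro x hx
    have hxs : τ x ∈ s₁ := Finset.mem_image_of_mem _ hx
    have h3 := hαagree (τ x) hxs
    simp only [Equiv.Perm.mul_apply]
    rw [h3]
    simp only [hf₁, Equiv.Perm.coe_inv, Equiv.symm_apply_apply]
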